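/- Let S be a symmetric numerical semigroup with multiplicity m and delta invariant δ, and let w₀ be its weight function w₀(ℓ) = #([0,ℓ)∩S) − #([0,ℓ)\S). Then for any integer ℓ ≤ δ, max{w₀(x) : ℓ ≤ x ≤ min(ℓ+m−1, δ)} = max{w₀(x) : ℓ ≤ x ≤ δ}. -/
import Mathlib


open Finset

open scoped Classical in
/-- Weight function of a subset `S ⊆ ℕ`:
`w0 S ℓ = #([0,ℓ) ∩ S) − #([0,ℓ) \ S)`. -/
noncomputable def w0 (S : Set ℕ) (l : ℕ) : ℤ :=
  (((Finset.range l).filter (fun k => k ∈ S)).card : ℤ) -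
    (((Finset.range l).filter (fun k => k ∉ S)).card : ℤ)

lemma split_card_aux (p : ℕ → Prop) [DecidablePred p] (x m : ℕ) :
    ((range (x + m)).filter p).card
      = ((range x).filter p).card + ((Ico x (x + m)).filter p).card := by
  rw [range_eq_Ico, ← Finset.Ico_union_Ico_eq_Ico (Nat.zero_le x) (Nat.le_add_right x m),
    filter_union, card_union_of_disjoint, ← range_eq_Ico]
  exact disjoint_filter_filter (Finset.Ico_disjoint_Ico_consecutive 0 x (x + m))

open scoped Classical in
lemma c_eq_two_delta (S : Set ℕ) (c : ℕ)
    (hc : ∀ n, c ≤ n → n ∈ S)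
    (hsym : ∀ ℓ < c, ℓ ∈ S ↔ (c - 1 - ℓ) ∉ S)
    (δ : ℕ) (hδ : δ = (Sᶜ : Set ℕ).ncard) : c = 2 * δ := by
  have hset : (Sᶜ : Set ℕ) = ↑((range c).filter fun k => k ∉ S) := by
    ext n
    simp only [Set.mem_compl_iff, coe_filter, mem_range, Set.mem_setOf_eq]
    constructor
    · intro h; exact ⟨by by_contra hn; exact h (hc n (by omega)), h⟩
    · exact fun h => h.2
  have hδ' : δ = ((range c).filter fun k => k ∉ S).card := by
    rw [hδ, hset, Set.ncard_coe_finset]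
  have hbij : ((range c).filter fun k => k ∈ S).card
      = ((range c).filter fun k => k ∉ S).card := by
    apply Finset.card_bij (fun k _ => c - 1 - k)
    · intro k hk
      simp only [mem_filter, mem_range] at hk ⊢
      exact ⟨by omega, (hsym k hk.1).1 hk.2⟩
    · intro k hk k' hk'
      simp only [mem_filter, mem_range] at hk hk'
      omega
    · intro j hj
      simp only [mem_filter, mem_range] at hj
      refine ⟨c - 1 - j, ?_, by omega⟩
      simp only [mem_filter, mem_range]
      have := hsym (c - 1 - j) (by omega)
      rw [show c - 1 - (c - 1 - j) = j by omega] at this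
      exact ⟨by omega, this.2 hj.2⟩
  have := Finset.card_filter_add_card_filter_not
    (s := range c) (p := fun k => k ∈ S)
  simp only [card_range] at this
  omega

open scoped Classical in
lemma w0_step (S : Set ℕ)
    (hadd : ∀ a b, a ∈ S → b ∈ S → a + b ∈ S) (c : ℕ)
    (hsym : ∀ ℓ < c, ℓ ∈ S ↔ (c - 1 - ℓ) ∉ S)
    (δ : ℕ) (hc2 : c = 2 * δ)
    (m : ℕ) (hm : m ∈ S) (hmpos : 0 < m)
    (x : ℕ) (hx : x + m ≤ δ) : w0 S (x + m) ≤ w0 S x := by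
  have hmul : ∀ t b, b ∈ S → b + m * t ∈ S := by
    intro t
    induction t with
    | zero => simp
    | succ n ih =>
      intro b hb
      have := hadd _ m (ih b hb) hm
      rwa [show b + m * n + m = b + m * (n + 1) by ring] at this
  have hnot : ∀ a b : ℕ, a ∉ S → b ≤ a → m ∣ (a - b) → b ∉ S := by
    intro a b ha hba ⟨t, ht⟩ hb
    exact ha (by have := hmul t b hb; rwa [show b + m * t = a by omega] at this)
  have key : ((Ico x (x + m)).filter fun k => k ∈ S).card
      ≤ ((Ico x (x + m)).filter fun k => k ∉ S).card := by
    apply Finset.card_le_card_of_injOn (fun k => x + (c - 1 - k - x) % m)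
    · intro k hk
      simp only [mem_coe, mem_filter, mem_Ico] at hk ⊢
      obtain ⟨⟨hk1, hk2⟩, hkS⟩ := hk
      have hkc : k < c := by omega
      have ha : c - 1 - k ∉ S := (hsym k hkc).1 hkS
      refine ⟨⟨le_add_right le_rfl, by have := Nat.mod_lt (c - 1 - k - x) hmpos; omega⟩, ?_⟩
      apply hnot (c - 1 - k) _ ha
      · have := Nat.mod_le (c - 1 - k - x) m; omega
      · have h1 : (c - 1 - k - x) % m + m * ((c - 1 - k - x) / m) = c - 1 - k - x :=
          Nat.mod_add_div _ _
        exact ⟨(c - 1 - k - x) / m, by omega⟩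
    · intro k hk k' hk' heq
      simp only [mem_coe, mem_filter, mem_Ico] at hk hk'
      simp only at heq
      have heq' : (c - 1 - k - x) % m = (c - 1 - k' - x) % m := by omega
      rcases Nat.le_total k k' with h | h
      · have hA : c - 1 - k - x = (c - 1 - k' - x) + (k' - k) := by omega
        have hmod : (c - 1 - k' - x) ≡ (c - 1 - k - x) [MOD m] := heq'.symm
        have hdvd : m ∣ (c - 1 - k - x) - (c - 1 - k' - x) :=
          (Nat.modEq_iff_dvd' (by omega)).mp hmod
        have hkk : m ∣ k' - k := by rwa [hA, Nat.add_sub_cancel_left] at hdvd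
        have := Nat.eq_zero_of_dvd_of_lt hkk
        omega
      · have hA : c - 1 - k' - x = (c - 1 - k - x) + (k - k') := by omega
        have hmod : (c - 1 - k - x) ≡ (c - 1 - k' - x) [MOD m] := heq'
        have hdvd : m ∣ (c - 1 - k' - x) - (c - 1 - k - x) :=
          (Nat.modEq_iff_dvd' (by omega)).mp hmod
        have hkk : m ∣ k - k' := by rwa [hA, Nat.add_sub_cancel_left] at hdvd
        have := Nat.eq_zero_of_dvd_of_lt hkk
        omega
  unfold w0
  simp only [split_card_aux]
  push_cast
  omega

theorem window_lemma (S : Set ℕ) (h0 : 0 ∈ S)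
    (hadd : ∀ a b, a ∈ S → b ∈ S → a + b ∈ S)
    (hfin : (Sᶜ : Set ℕ).Finite) (c : ℕ)
    (hc : ∀ n, c ≤ n → n ∈ S)
    (hcmin : ∀ c', (∀ n, c' ≤ n → n ∈ S) → c ≤ c')
    (hsym : ∀ ℓ < c, ℓ ∈ S ↔ (c - 1 - ℓ) ∉ S)
    (δ : ℕ) (hδ : δ = (Sᶜ : Set ℕ).ncard)
    (m : ℕ) (hm : m ∈ S) (hmpos : 0 < m)
    (hmmin : ∀ k ∈ S, 0 < k → m ≤ k)
    (ℓ : ℕ) (hℓ : ℓ ≤ δ) :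
    ((Finset.Icc ℓ (min (ℓ + m - 1) δ)).image (w0 S)).max =
      ((Finset.Icc ℓ δ).image (w0 S)).max := by
  have hc2 : c = 2 * δ := c_eq_two_delta S c hc hsym δ hδ
  rcases le_or_gt δ (ℓ + m - 1) with h | h
  · rw [min_eq_right h]
  · rw [min_eq_left h.le]
    -- descent: every x in [ℓ, δ] is dominated by some y in [ℓ, ℓ+m-1]
    have descent : ∀ x, ℓ ≤ x → x ≤ δ →
        ∃ y, ℓ ≤ y ∧ y ≤ ℓ + m - 1 ∧ w0 S x ≤ w0 S y := by
      intro x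
      induction x using Nat.strong_induction_on with
      | _ x ih =>
        intro hx1 hx2
        rcases le_or_gt x (ℓ + m - 1) with hxs | hxs
        · exact ⟨x, hx1, hxs, le_rfl⟩
        · have hxm : ℓ + m ≤ x := by omega
          have hstep : w0 S (x - m + m) ≤ w0 S (x - m) :=
            w0_step S hadd c hsym δ hc2 m hm hmpos (x - m) (by omega)
          rw [show x - m + m = x by omega] at hstep
          obtain ⟨y, hy1, hy2, hy3⟩ := ih (x - m) (by omega) (by omega) (by omega)
          exact ⟨y, hy1, hy2, hstep.trans hy3⟩
    apply le_antisymm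
    · exact Finset.max_mono (Finset.image_subset_image (Finset.Icc_subset_Icc_right h.le))
    · rw [Finset.max_le_iff]
      intro b hb
      simp only [Finset.mem_image, Finset.mem_Icc] at hb
      obtain ⟨x, ⟨hx1, hx2⟩, rfl⟩ := hb
      obtain ⟨y, hy1, hy2, hy3⟩ := descent x hx1 hx2
      have hymem : w0 S y ∈ (Finset.Icc ℓ (ℓ + m - 1)).image (w0 S) :=
        Finset.mem_image_of_mem _ (Finset.mem_Icc.mpr ⟨hy1, hy2⟩)
      exact le_trans (WithBot.coe_le_coe.mpr hy3) (Finset.le_max hymem)
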